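/- In the lexicographic order on 2^ℕ, the set of all odd numbers {1,3,5,7,…} is the supremum of the finite sets {1,3,…,2n−1} (n ≥ 1), and the set {1,2,4,6,…} (1 together with all positive even numbers) is simultaneously the supremum of the sets {1,2,4,…,2n} (n ≥ 1) and the infimum of the sets {1,2,4,…,2n−2,2n−1} (n ≥ 2). -/
import Mathlib


/-- The lexicographic order on the power set of `ℕ`:
`I ≤ J` iff `inf (J \ I) ≤ inf (I \ J)`, where the infimum of the empty set is `∞`. -/
def lexLE (I J : Set ℕ) : Prop :=
  (⨅ n ∈ J \ I, (n : ℕ∞)) ≤ ⨅ n ∈ I \ J, (n : ℕ∞)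

/-- Strict lexicographic order. -/
def lexLT (I J : Set ℕ) : Prop := lexLE I J ∧ I ≠ J

/-- The Gabriel–Roiter measure `{1, 3, 5, …, 2n−1}` of the preprojective Kronecker
module `P_n`. -/
def GRP (n : ℕ) : Set ℕ := {k | Odd k ∧ k ≤ 2 * n - 1}

/-- The Gabriel–Roiter measure `{1, 2, 4, …, 2n}` of the regular Kronecker
module `R_n(λ)`. -/
def GRR (n : ℕ) : Set ℕ := {1} ∪ {k | 0 < k ∧ Even k ∧ k ≤ 2 * n}

/-- The Gabriel–Roiter measure `{1, 2, 4, …, 2n−2, 2n−1}` of the preinjective Kronecker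
module `Q_n`. -/
def GRQ (n : ℕ) : Set ℕ := {1} ∪ {k | 0 < k ∧ Even k ∧ k ≤ 2 * n - 2} ∪ {2 * n - 1}

/-- `I` is a supremum of `S` with respect to the lexicographic order. -/
def lexIsLUB (S : Set (Set ℕ)) (I : Set ℕ) : Prop :=
  (∀ J ∈ S, lexLE J I) ∧ ∀ K : Set ℕ, (∀ J ∈ S, lexLE J K) → lexLE I K

/-- `I` is an infimum of `S` with respect to the lexicographic order. -/
def lexIsGLB (S : Set (Set ℕ)) (I : Set ℕ) : Prop :=
  (∀ J ∈ S, lexLE I J) ∧ ∀ K : Set ℕ, (∀ J ∈ S, lexLE K J) → lexLE K I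

/-- In the lexicographic order on `2^ℕ`: the set of odd numbers is the supremum of the
sets `{1,3,…,2n−1}` (`n ≥ 1`), and the set `{1} ∪ {even numbers}` is simultaneously the
supremum of the sets `{1,2,4,…,2n}` (`n ≥ 1`) and the infimum of the sets
`{1,2,4,…,2n−2,2n−1}` (`n ≥ 2`). -/
lemma einf_le {s : Set ℕ} {m : ℕ} (hm : m ∈ s) : (⨅ n ∈ s, (n : ℕ∞)) ≤ (m : ℕ∞) :=
  iInf₂_le m hm

lemma le_einf {s : Set ℕ} {m : ℕ} (h : ∀ a ∈ s, m ≤ a) : (m : ℕ∞) ≤ ⨅ n ∈ s, (n : ℕ∞) :=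
  le_iInf₂ fun a ha => Nat.cast_le.mpr (h a ha)

lemma exists_of_einf_le {s : Set ℕ} {m : ℕ} (h : (⨅ n ∈ s, (n : ℕ∞)) ≤ (m : ℕ∞)) :
    ∃ a ∈ s, a ≤ m := by
  by_contra hc
  push_neg at hc
  have h2 : ((m + 1 : ℕ) : ℕ∞) ≤ ⨅ n ∈ s, (n : ℕ∞) :=
    le_einf fun a ha => hc a ha
  have hlt : (m : ℕ∞) < ((m + 1 : ℕ) : ℕ∞) := by exact_mod_cast Nat.lt_succ_self m
  exact absurd h (not_le.mpr (lt_of_lt_of_le hlt h2))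

lemma lexLE_of_min (I J : Set ℕ) (m : ℕ) (h1 : ∃ a ∈ J \ I, a ≤ m)
    (h2 : ∀ a ∈ I \ J, m ≤ a) : lexLE I J := by
  obtain ⟨a, ha, ham⟩ := h1
  calc (⨅ n ∈ J \ I, (n : ℕ∞)) ≤ (a : ℕ∞) := einf_le ha
  _ ≤ (m : ℕ∞) := Nat.cast_le.mpr ham
  _ ≤ _ := le_einf h2

lemma lexLE_of_subset {I J : Set ℕ} (h : I ⊆ J) : lexLE I J := by
  unfold lexLE
  rw [Set.diff_eq_empty.mpr h]
  simp

lemma exists_min {s : Set ℕ} (hs : s.Nonempty) : ∃ m ∈ s, ∀ a ∈ s, m ≤ a := by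
  classical
  exact ⟨Nat.find hs, Nat.find_spec hs, fun a ha => Nat.find_le ha⟩

theorem kronecker_GR_limits :
    lexIsLUB { I | ∃ n : ℕ, 1 ≤ n ∧ I = GRP n } {k | Odd k} ∧
    lexIsLUB { I | ∃ n : ℕ, 1 ≤ n ∧ I = GRR n } ({1} ∪ {k | 0 < k ∧ Even k}) ∧
    lexIsGLB { I | ∃ n : ℕ, 2 ≤ n ∧ I = GRQ n } ({1} ∪ {k | 0 < k ∧ Even k}) := by
  refine ⟨⟨?_, ?_⟩, ⟨?_, ?_⟩, ⟨?_, ?_⟩⟩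
  · rintro J ⟨n, hn, rfl⟩
    exact lexLE_of_subset fun k hk => hk.1
  · intro K hK
    by_cases hsub : {k | Odd k} ⊆ K
    · exact lexLE_of_subset hsub
    · obtain ⟨m, hm, hmin⟩ := exists_min (Set.diff_nonempty.mpr hsub)
      obtain ⟨j, hj⟩ := (hm.1 : Odd m)
      have h1 := hK (GRP (j + 1)) ⟨j + 1, by omega, rfl⟩
      have hmem : m ∈ GRP (j + 1) \ K := ⟨⟨hm.1, by omega⟩, hm.2⟩
      obtain ⟨a, ha, ham⟩ := exists_of_einf_le (le_trans h1 (einf_le hmem))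
      refine lexLE_of_min _ _ m ⟨a, ⟨ha.1, fun haodd => ha.2 ⟨haodd, by omega⟩⟩, ham⟩ hmin
  · rintro J ⟨n, hn, rfl⟩
    refine lexLE_of_subset ?_
    rintro k (hk | hk)
    · exact Or.inl hk
    · exact Or.inr ⟨hk.1, hk.2.1⟩
  · intro K hK
    by_cases hsub : ({1} ∪ {k | 0 < k ∧ Even k} : Set ℕ) ⊆ K
    · exact lexLE_of_subset hsub
    · obtain ⟨m, hm, hmin⟩ := exists_min (Set.diff_nonempty.mpr hsub)
      have hm1 : 1 ≤ m := by
        rcases hm.1 with h | h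
        · exact h.ge
        · exact h.1
      have hmG : m ∈ GRR m := by
        rcases hm.1 with h | h
        · exact Or.inl h
        · exact Or.inr ⟨h.1, h.2, by omega⟩
      have h1 := hK (GRR m) ⟨m, hm1, rfl⟩
      obtain ⟨a, ha, ham⟩ := exists_of_einf_le (le_trans h1 (einf_le ⟨hmG, hm.2⟩))
      refine lexLE_of_min _ _ m ⟨a, ⟨ha.1, ?_⟩, ham⟩ hmin
      rintro (h | h)
      · exact ha.2 (Or.inl h)
      · exact ha.2 (Or.inr ⟨h.1, h.2, by omega⟩)
  · rintro J ⟨n, hn, rfl⟩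
    refine lexLE_of_min _ _ (2 * n - 1) ⟨2 * n - 1, ⟨Or.inr rfl, ?_⟩, le_refl _⟩ ?_
    · rintro (h | h)
      · simp only [Set.mem_singleton_iff] at h
        omega
      · rcases h.2 with ⟨c, hc⟩
        omega
    · intro a ha
      rcases ha.1 with h | h
      · exact absurd (Or.inl (Or.inl h)) ha.2
      · by_contra hlt
        push_neg at hlt
        rcases h.2 with ⟨c, hc⟩
        exact ha.2 (Or.inl (Or.inr ⟨h.1, h.2, by omega⟩))
  · intro K hK
    by_cases hsub : K ⊆ ({1} ∪ {k | 0 < k ∧ Even k} : Set ℕ)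
    · exact lexLE_of_subset hsub
    · obtain ⟨m, hm, hmin⟩ := exists_min (Set.diff_nonempty.mpr hsub)
      have hm1 : m ≠ 1 := fun h => hm.2 (Or.inl h)
      have hmodd : ¬ (0 < m ∧ Even m) := fun h => hm.2 (Or.inr h)
      rcases Nat.eq_zero_or_pos m with h0 | hpos
      · -- m = 0 : contradiction with lexLE K (GRQ 2)
        have h1 := hK (GRQ 2) ⟨2, le_refl 2, rfl⟩
        have h0G : (0 : ℕ) ∉ GRQ 2 := by
          rintro ((h | h) | h)
          · simp only [Set.mem_singleton_iff] at h; omega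
          · exact absurd h.1 (by omega)
          · simp only [Set.mem_singleton_iff] at h; omega
        have h2 : m ∈ K \ GRQ 2 := ⟨hm.1, h0 ▸ h0G⟩
        obtain ⟨a, ha, ha0⟩ := exists_of_einf_le (le_trans h1 (einf_le h2))
        rw [h0] at ha0
        interval_cases a
        exact absurd ha.1 h0G
      · have hodd : m % 2 = 1 := by
          rcases Nat.even_or_odd m with he | ho
          · exact absurd ⟨hpos, he⟩ hmodd
          · exact Nat.odd_iff.mp ho
        have hm3 : 3 ≤ m := by omega
        obtain ⟨n, hn⟩ : ∃ n, m = 2 * n - 1 ∧ 2 ≤ n := ⟨(m + 1) / 2, by omega⟩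
        by_cases hb : ∃ b ∈ ({1} ∪ {k | 0 < k ∧ Even k} : Set ℕ) \ K, b ≤ m
        · exact lexLE_of_min _ _ m hb hmin
        · push_neg at hb
          exfalso
          have h1 := hK (GRQ (n + 1)) ⟨n + 1, by omega, rfl⟩
          have hmG : m ∉ GRQ (n + 1) := by
            rintro ((h | h) | h)
            · simp only [Set.mem_singleton_iff] at h; omega
            · rcases h.2.1 with ⟨c, hc⟩; omega
            · simp only [Set.mem_singleton_iff] at h; omega
          obtain ⟨a, ha, ham⟩ := exists_of_einf_le (le_trans h1 (einf_le ⟨hm.1, hmG⟩))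
          have haE : a ∈ ({1} ∪ {k | 0 < k ∧ Even k} : Set ℕ) := by
            rcases ha.1 with (h | h) | h
            · exact Or.inl h
            · exact Or.inr ⟨h.1, h.2.1⟩
            · simp only [Set.mem_singleton_iff] at h; omega
          exact absurd ham (not_le.mpr (hb a ⟨haE, ha.2⟩))
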